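/- arXiv:2203.15921 — 2 statements merged into one kernel-verified Lean document; each statement's English description precedes it below -/
import Mathlib

section
/- Let n ≥ 1 and let μ_n be the product of n copies of the uniform distribution on [0, 2π). Then the expected GEPP ℓ∞ growth factor of a Haar-butterfly matrix equals N^γ for γ = log₂(1 + (log 4)/π): ∫ ∏_{j=1}^n (1 + min(|tan θ_j|, 1/|tan θ_j|)) dμ_n(θ) = (1 + (2 ln 2)/π)ⁿ = N^{log₂(1 + (2 ln 2)/π)}, where N = 2ⁿ. -/
open MeasureTheory Real

/-- The uniform probability distribution on `[0, 2π)`: `(2π)⁻¹·λ` restricted to `[0, 2π)`. -/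
noncomputable def unif : Measure ℝ :=
  (ENNReal.ofReal (2 * π))⁻¹ • volume.restrict (Set.Ico 0 (2 * π))

/-- The product `μ_n` of `n` independent copies of the uniform distribution on `[0, 2π)`,
the distribution of the angles of a Haar-butterfly matrix `B(θ) = R(θ_1) ⊗ ⋯ ⊗ R(θ_n)`. -/
noncomputable def μpi (n : ℕ) : Measure (Fin n → ℝ) :=
  Measure.pi fun _ => unif

/-- The growth-factor integrand for a single angle. -/
noncomputable def gf : ℝ → ℝ := fun x => min |Real.tan x| |Real.tan x|⁻¹

lemma gf_meas : Measurable gf := by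
  have ht : Measurable Real.tan := by
    have : Real.tan = fun x => Real.sin x / Real.cos x := funext Real.tan_eq_sin_div_cos
    rw [this]
    exact Real.measurable_sin.div Real.measurable_cos
  exact ht.abs.min ht.abs.inv

lemma gf_nonneg (x : ℝ) : 0 ≤ gf x :=
  le_min (abs_nonneg _) (inv_nonneg.2 (abs_nonneg _))

lemma gf_le_one (x : ℝ) : gf x ≤ 1 := by
  rcases le_or_gt |Real.tan x| 1 with h | h
  · exact (min_le_left _ _).trans h
  · exact (min_le_right _ _).trans (inv_le_one_of_one_le₀ h.le)

lemma abs_tan_add_pi_div_two (x : ℝ) : |Real.tan (x + π / 2)| = |Real.tan x|⁻¹ := by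
  rw [Real.tan_eq_sin_div_cos, Real.tan_eq_sin_div_cos, Real.sin_add_pi_div_two,
    Real.cos_add_pi_div_two, abs_div, abs_div, abs_neg, inv_div]

lemma gf_periodic : Function.Periodic gf (π / 2) := fun x => by
  simp only [gf, abs_tan_add_pi_div_two, inv_inv]
  exact min_comm _ _

lemma gf_intInt (a b : ℝ) : IntervalIntegrable gf volume a b := by
  constructor <;>
  · refine Measure.integrableOn_of_bounded measure_Ioc_lt_top.ne
      gf_meas.aestronglyMeasurable (M := 1) (ae_of_all _ fun x => ?_)
    rw [Real.norm_eq_abs, abs_of_nonneg (gf_nonneg x)]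
    exact gf_le_one x

lemma log_sqrt_two_div_two : Real.log (√2 / 2) = -(Real.log 2 / 2) := by
  rw [Real.log_div (Real.sqrt_pos.mpr two_pos).ne' two_ne_zero,
    Real.log_sqrt (by norm_num : (0:ℝ) ≤ 2)]
  ring

lemma gf_int1 : ∫ x in (0:ℝ)..(π / 4), gf x = Real.log 2 / 2 := by
  have hpi := Real.pi_pos
  have h4 : (0:ℝ) ≤ π / 4 := by linarith
  have hEq : Set.EqOn gf Real.tan (Set.uIcc 0 (π / 4)) := by
    intro x hx
    rw [Set.uIcc_of_le h4] at hx
    have h1 : 0 ≤ Real.tan x :=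
      Real.tan_nonneg_of_nonneg_of_le_pi_div_two hx.1 (by linarith [hx.2])
    have h2 : Real.tan x ≤ 1 := by
      have := Real.strictMonoOn_tan.monotoneOn
        (Set.mem_Ioo.2 ⟨by linarith [hx.1], by linarith [hx.2]⟩)
        (Set.mem_Ioo.2 ⟨by linarith, by linarith⟩) hx.2
      rwa [Real.tan_pi_div_four] at this
    have habs : |Real.tan x| = Real.tan x := abs_of_nonneg h1
    rw [gf, habs, min_eq_left]
    rcases eq_or_lt_of_le h1 with h0 | h0
    · rw [← h0]; norm_num
    · exact h2.trans ((one_le_inv₀ h0).2 h2)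
  rw [intervalIntegral.integral_congr hEq]
  have hderiv : ∀ x ∈ Set.uIcc (0:ℝ) (π / 4),
      HasDerivAt (fun y => -Real.log (Real.cos y)) (Real.tan x) x := by
    intro x hx
    rw [Set.uIcc_of_le h4] at hx
    have hc : 0 < Real.cos x :=
      Real.cos_pos_of_mem_Ioo ⟨by linarith [hx.1], by linarith [hx.2]⟩
    have := ((Real.hasDerivAt_cos x).log hc.ne').neg
    refine this.congr_deriv ?_
    rw [Real.tan_eq_sin_div_cos]
    ring
  have hint : IntervalIntegrable Real.tan volume 0 (π / 4) := by
    apply ContinuousOn.intervalIntegrable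
    apply Real.continuousOn_tan.mono
    intro x hx
    rw [Set.uIcc_of_le h4] at hx
    exact (Real.cos_pos_of_mem_Ioo ⟨by linarith [hx.1], by linarith [hx.2]⟩).ne'
  rw [intervalIntegral.integral_eq_sub_of_hasDerivAt hderiv hint, Real.cos_pi_div_four,
    Real.cos_zero, Real.log_one, log_sqrt_two_div_two]
  ring

lemma gf_int2 : ∫ x in (π / 4 : ℝ)..(π / 2), gf x = Real.log 2 / 2 := by
  have hpi := Real.pi_pos
  have h4 : (π / 4 : ℝ) ≤ π / 2 := by linarith
  have hEq : Set.EqOn gf (fun y => Real.cos y / Real.sin y) (Set.uIcc (π / 4) (π / 2)) := by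
    intro x hx
    rw [Set.uIcc_of_le h4] at hx
    rcases eq_or_lt_of_le hx.2 with h0 | h0
    · rw [h0]
      simp [gf, Real.tan_pi_div_two, Real.cos_pi_div_two]
    · have hc : 0 < Real.cos x := Real.cos_pos_of_mem_Ioo ⟨by linarith [hx.1], h0⟩
      have h1 : 1 ≤ Real.tan x := by
        have := Real.strictMonoOn_tan.monotoneOn
          (Set.mem_Ioo.2 ⟨by linarith, by linarith⟩)
          (Set.mem_Ioo.2 ⟨by linarith [hx.1], h0⟩) hx.1
        rwa [Real.tan_pi_div_four] at this
    -- |tan x| = tan x, min = (tan x)⁻¹ = cos/sin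
      have habs : |Real.tan x| = Real.tan x := abs_of_nonneg (by linarith)
      rw [gf, habs, min_eq_right ((inv_le_one_of_one_le₀ h1).trans h1),
        Real.tan_eq_sin_div_cos, inv_div]
  rw [intervalIntegral.integral_congr hEq]
  have hderiv : ∀ x ∈ Set.uIcc (π / 4 : ℝ) (π / 2),
      HasDerivAt (fun y => Real.log (Real.sin y)) (Real.cos x / Real.sin x) x := by
    intro x hx
    rw [Set.uIcc_of_le h4] at hx
    have hs : 0 < Real.sin x :=
      Real.sin_pos_of_pos_of_lt_pi (by linarith [hx.1]) (by linarith [hx.2])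
    exact (Real.hasDerivAt_sin x).log hs.ne'
  have hint : IntervalIntegrable (fun y => Real.cos y / Real.sin y) volume (π / 4) (π / 2) := by
    apply ContinuousOn.intervalIntegrable
    apply Real.continuous_cos.continuousOn.div Real.continuous_sin.continuousOn
    intro x hx
    rw [Set.uIcc_of_le h4] at hx
    exact (Real.sin_pos_of_pos_of_lt_pi (by linarith [hx.1]) (by linarith [hx.2])).ne'
  rw [intervalIntegral.integral_eq_sub_of_hasDerivAt hderiv hint, Real.sin_pi_div_two,
    Real.sin_pi_div_four, Real.log_one, log_sqrt_two_div_two]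
  ring

lemma gf_int_quarter : ∫ x in (0:ℝ)..(π / 2), gf x = Real.log 2 := by
  rw [← intervalIntegral.integral_add_adjacent_intervals (gf_intInt 0 (π / 4))
    (gf_intInt (π / 4) (π / 2)), gf_int1, gf_int2]
  ring

lemma gf_int_full : ∫ x in (0:ℝ)..(2 * π), gf x = 4 * Real.log 2 := by
  have h := gf_periodic.intervalIntegral_add_zsmul_eq 4 0 gf_intInt
  have h2 : (0:ℝ) + (4:ℤ) • (π / 2) = 2 * π := by rw [zsmul_eq_mul]; push_cast; ring
  rw [h2] at h
  rw [h]
  have h3 : (0:ℝ) + π / 2 = π / 2 := by ring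
  rw [h3, gf_int_quarter, zsmul_eq_mul]
  push_cast
  ring

lemma unif_prob : IsProbabilityMeasure unif := by
  constructor
  have hpi := Real.pi_pos
  rw [unif, Measure.smul_apply, Measure.restrict_apply MeasurableSet.univ, Set.univ_inter,
    Real.volume_Ico, smul_eq_mul, sub_zero]
  exact ENNReal.inv_mul_cancel (by simp [ENNReal.ofReal_pos]; linarith) ENNReal.ofReal_ne_top

lemma integral_gf_unif : ∫ x, gf x ∂unif = 2 * Real.log 2 / π := by
  have hpi := Real.pi_pos
  rw [unif, integral_smul_measure, ENNReal.toReal_inv, ENNReal.toReal_ofReal (by linarith),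
    MeasureTheory.integral_Ico_eq_integral_Ioo, ← MeasureTheory.integral_Ioc_eq_integral_Ioo,
    ← intervalIntegral.integral_of_le (by linarith : (0:ℝ) ≤ 2 * π), gf_int_full, smul_eq_mul]
  field_simp
  ring

lemma integral_one_add_gf : ∫ x, (1 + gf x) ∂unif = 1 + 2 * Real.log 2 / π := by
  haveI := unif_prob
  have hg : Integrable gf unif := by
    refine (integrable_const (1:ℝ)).mono' gf_meas.aestronglyMeasurable (ae_of_all _ fun x => ?_)
    rw [Real.norm_eq_abs, abs_of_nonneg (gf_nonneg x)]
    exact gf_le_one x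
  rw [integral_add (integrable_const 1) hg, integral_const, integral_gf_unif]
  simp

/-- The expected GEPP ℓ∞ growth factor of an `N×N` Haar-butterfly matrix (`N = 2ⁿ`) is
`N^γ` for `γ = log₂(1 + (2 ln 2)/π)`:
`∫ ∏_j (1 + min(|tan θ_j|, 1/|tan θ_j|)) dμ_n(θ) = (1 + (2 ln 2)/π)ⁿ`. -/
theorem expected_GEPP_linf_growth (n : ℕ) (hn : 1 ≤ n) :
    (∫ θ : Fin n → ℝ,
        ∏ j, (1 + min |Real.tan (θ j)| |Real.tan (θ j)|⁻¹) ∂(μpi n)) =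
      (1 + 2 * Real.log 2 / π) ^ n ∧
    ((1 + 2 * Real.log 2 / π : ℝ)) ^ n =
      ((2 : ℝ) ^ n) ^ Real.logb 2 (1 + 2 * Real.log 2 / π) := by
  constructor
  · letI : MeasureSpace ℝ := ⟨unif⟩
    haveI : IsProbabilityMeasure (volume : Measure ℝ) := unif_prob
    have h := MeasureTheory.integral_fintype_prod_volume_eq_pow (𝕜 := ℝ) (ι := Fin n)
      (fun x : ℝ => 1 + gf x)
    rw [Fintype.card_fin] at h
    have hμ : μpi n = (volume : Measure (Fin n → ℝ)) := rfl
    show (∫ θ : Fin n → ℝ, ∏ j, (1 + gf (θ j)) ∂(μpi n)) = (1 + 2 * Real.log 2 / π) ^ n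
    rw [hμ, h]
    have hv : ∫ x, (1 + gf x) ∂(volume : Measure ℝ) = 1 + 2 * Real.log 2 / π :=
      integral_one_add_gf
    rw [hv]
  · have h2 : (0:ℝ) < Real.log 2 := Real.log_pos one_lt_two
    have hpi := Real.pi_pos
    have hx : (0:ℝ) < 1 + 2 * Real.log 2 / π := by positivity
    have key : ((2:ℝ) ^ n : ℝ) ^ Real.logb 2 (1 + 2 * Real.log 2 / π) =
        ((2:ℝ) ^ Real.logb 2 (1 + 2 * Real.log 2 / π)) ^ (n:ℝ) := by
      rw [← Real.rpow_natCast 2 n, ← Real.rpow_mul (by norm_num),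
        ← Real.rpow_mul (by norm_num), mul_comm]
    rw [key, Real.rpow_logb (by norm_num) (by norm_num) hx, Real.rpow_natCast]
end

section
/- For θ uniformly distributed on [0, 2π), the random variable ln(1 + min(tan²θ, 1/tan²θ)) has mean 2 ln 2 − 4G/π, where G = Σ_{k≥0} (−1)^k/(2k+1)² is Catalan's constant; that is, (2π)⁻¹ ∫₀^{2π} ln(1 + min(tan²θ, 1/tan²θ)) dθ = 2 ln 2 − (4/π)·Σ_{k=0}^∞ (−1)^k/(2k+1)². (This is the mean of the logarithm of the per-coordinate GEPP growth factor of a Haar-butterfly matrix.) -/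
open MeasureTheory Real
open Set Filter Topology

lemma helper_Ioc {f F : ℝ → ℝ} {b L : ℝ} (hb : 0 < b)
    (hd : ∀ x ∈ Ioc (0:ℝ) b, HasDerivAt F (f x) x)
    (hc : ContinuousOn f (Ioc 0 b))
    (hnn : ∀ x ∈ Ioc (0:ℝ) b, 0 ≤ f x)
    (hL : Tendsto F (𝓝[>] (0:ℝ)) (𝓝 L)) :
    IntegrableOn f (Ioc 0 b) ∧ ∫ x in Ioc (0:ℝ) b, f x = F b - L := by
  set a : ℕ → ℝ := fun n => b / (n + 1) with ha_def
  have hapos : ∀ n, 0 < a n := fun n => by positivity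
  have haleb : ∀ n, a n ≤ b := by
    intro n
    rw [ha_def]
    calc b / (n+1) ≤ b / 1 := by
          apply div_le_div_of_nonneg_left hb.le one_pos
          simp [Nat.cast_nonneg]
      _ = b := div_one b
  have ha0 : Tendsto a atTop (𝓝 0) := by
    rw [ha_def]
    have := tendsto_one_div_add_atTop_nhds_zero_nat (𝕜 := ℝ)
    have h2 : Tendsto (fun n : ℕ => b * (1 / (n + 1))) atTop (𝓝 (b * 0)) := this.const_mul b
    simpa [div_eq_mul_inv, one_div] using h2
  -- FTC on subintervals
  have hval : ∀ y z : ℝ, 0 < y → y ≤ z → z ≤ b → ∫ x in y..z, f x = F z - F y := by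
    intro y z hy hyz hzb
    apply intervalIntegral.integral_eq_sub_of_hasDerivAt
    · intro x hx
      rw [uIcc_of_le hyz] at hx
      exact hd x ⟨lt_of_lt_of_le hy hx.1, le_trans hx.2 hzb⟩
    · apply ContinuousOn.intervalIntegrable
      apply hc.mono
      rw [uIcc_of_le hyz]
      exact fun x hx => ⟨lt_of_lt_of_le hy hx.1, le_trans hx.2 hzb⟩
  have hFmono : ∀ y z : ℝ, 0 < y → y ≤ z → z ≤ b → F y ≤ F z := by
    intro y z hy hyz hzb
    have h := hval y z hy hyz hzb
    have : 0 ≤ ∫ x in y..z, f x := by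
      apply intervalIntegral.integral_nonneg hyz
      intro u hu
      exact hnn u ⟨lt_of_lt_of_le hy hu.1, le_trans hu.2 hzb⟩
    linarith [h ▸ this]
  have hLle : ∀ x ∈ Ioc (0:ℝ) b, L ≤ F x := by
    intro x hx
    apply le_of_tendsto hL
    filter_upwards [Ioo_mem_nhdsGT_of_mem (Set.mem_Ico.mpr ⟨le_refl (0:ℝ), hx.1⟩)] with y hy
    exact hFmono y x hy.1 hy.2.le hx.2
  have hsub : ∀ n, Icc (a n) b ⊆ Ioc 0 b := fun n x hx =>
    ⟨lt_of_lt_of_le (hapos n) hx.1, hx.2⟩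
  have hint : ∀ n, IntegrableOn f (Ioc (a n) b) :=
    fun n => ((hc.mono (hsub n)).integrableOn_Icc).mono_set Ioc_subset_Icc_self
  have hintval : ∀ n, ∫ x in Ioc (a n) b, f x = F b - F (a n) := by
    intro n
    rw [← intervalIntegral.integral_of_le (haleb n)]
    exact hval (a n) b (hapos n) (haleb n) le_rfl
  have hIntOn : IntegrableOn f (Ioc 0 b) := by
    apply integrableOn_Ioc_of_intervalIntegral_norm_bounded_left (I := F b - L)
      (a := a) (l := atTop) hint ha0
    filter_upwards with n
    have hcongr : ∫ x in Ioc (a n) b, ‖f x‖ = ∫ x in Ioc (a n) b, f x := by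
      apply setIntegral_congr_fun measurableSet_Ioc
      intro x hx
      exact Real.norm_of_nonneg (hnn x ⟨lt_of_lt_of_le (hapos n) hx.1.le, hx.2⟩)
    rw [hcongr, hintval n]
    have := hLle (a n) ⟨hapos n, haleb n⟩
    linarith
  refine ⟨hIntOn, ?_⟩
  -- value via monotone convergence of sets
  have hmonoS : Monotone (fun n => Ioc (a n) b) := by
    intro m n hmn
    apply Ioc_subset_Ioc_left
    apply div_le_div_of_nonneg_left hb.le (by positivity)
    exact_mod_cast by exact_mod_cast add_le_add_left (Nat.cast_le.mpr hmn) 1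
  have hUnion : (⋃ n, Ioc (a n) b) = Ioc 0 b := by
    ext x
    simp only [mem_iUnion, mem_Ioc]
    constructor
    · rintro ⟨n, h1, h2⟩; exact ⟨lt_trans (hapos n) h1, h2⟩
    · rintro ⟨h1, h2⟩
      obtain ⟨n, hn⟩ := exists_nat_gt (b / x)
      refine ⟨n, ?_, h2⟩
      rw [ha_def, div_lt_iff₀ (by positivity)]
      calc b = (b / x) * x := by field_simp
        _ < n * x := by apply mul_lt_mul_of_pos_right _ h1; exact hn
        _ ≤ x * (n + 1) := by nlinarith [h1.le]
  have hlim := tendsto_setIntegral_of_monotone (fun n => measurableSet_Ioc) hmonoS (hUnion ▸ hIntOn)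
  rw [hUnion] at hlim
  have hlim2 : Tendsto (fun n => ∫ x in Ioc (a n) b, f x) atTop (𝓝 (F b - L)) := by
    simp only [hintval]
    exact tendsto_const_nhds.sub (hL.comp (tendsto_nhdsWithin_iff.mpr ⟨ha0, Eventually.of_forall (fun n => hapos n)⟩))
  exact tendsto_nhds_unique hlim hlim2

lemma pow_neg_log_key (k : ℕ) :
    IntegrableOn (fun t : ℝ => t ^ (2*k) * (-Real.log t)) (Ioc 0 1) ∧
    ∫ t in Ioc (0:ℝ) 1, t ^ (2*k) * (-Real.log t) = (((2*k+1 : ℕ) : ℝ))⁻¹ ^ 2 := by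
  set m : ℕ := 2*k+1 with hm
  have hmpos : (0:ℝ) < (m:ℝ) := by positivity
  set F : ℝ → ℝ := fun x => x ^ m / (m:ℝ)^2 - x ^ m * Real.log x / m with hF
  have hd : ∀ x ∈ Ioc (0:ℝ) 1, HasDerivAt F (x ^ (2*k) * (-Real.log x)) x := by
    intro x hx
    have hx0 : x ≠ 0 := ne_of_gt hx.1
    have h1 : HasDerivAt (fun x : ℝ => x ^ m) ((m:ℝ) * x ^ (2*k)) x := by
      simpa [hm] using hasDerivAt_pow m x
    have h2 : HasDerivAt Real.log x⁻¹ x := Real.hasDerivAt_log hx0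
    have h3 : HasDerivAt (fun x : ℝ => x ^ m * Real.log x)
        ((m:ℝ) * x ^ (2*k) * Real.log x + x ^ m * x⁻¹) x := h1.mul h2
    have h4 := (h1.div_const ((m:ℝ)^2)).sub (h3.div_const (m:ℝ))
    refine h4.congr_deriv ?_
    have hxm : x ^ m * x⁻¹ = x ^ (2*k) := by
      rw [hm, pow_succ]
      field_simp
    rw [hxm]
    field_simp
    ring
  have hc : ContinuousOn (fun t : ℝ => t ^ (2*k) * (-Real.log t)) (Ioc 0 1) := by
    apply ContinuousOn.mul (by fun_prop)
    exact (Real.continuousOn_log.mono (fun x hx => ne_of_gt hx.1)).neg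
  have hnn : ∀ x ∈ Ioc (0:ℝ) 1, 0 ≤ x ^ (2*k) * (-Real.log x) := by
    intro x hx
    apply mul_nonneg (pow_nonneg hx.1.le _)
    simp only [neg_nonneg]
    exact Real.log_nonpos hx.1.le hx.2
  have hL : Tendsto F (𝓝[>] (0:ℝ)) (𝓝 0) := by
    rw [hF]
    have l1 : Tendsto (fun x : ℝ => x ^ m / (m:ℝ)^2) (𝓝[>] (0:ℝ)) (𝓝 0) := by
      have h0 : Tendsto (fun x : ℝ => x ^ m) (𝓝 (0:ℝ)) (𝓝 ((0:ℝ) ^ m)) :=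
        (continuous_pow m).tendsto (0:ℝ)
      rw [zero_pow (by omega)] at h0
      simpa using (h0.mono_left nhdsWithin_le_nhds).div_const ((m:ℝ)^2)
    have l2 : Tendsto (fun x : ℝ => x ^ m * Real.log x / m) (𝓝[>] (0:ℝ)) (𝓝 0) := by
      have h := tendsto_log_mul_rpow_nhdsGT_zero (r := (m:ℝ)) hmpos
      have h' : Tendsto (fun x : ℝ => x ^ m * Real.log x) (𝓝[>] (0:ℝ)) (𝓝 0) := by
        apply h.congr' ?_ |>.mono_left le_rfl |>.congr (fun x => rfl)
        filter_upwards [self_mem_nhdsWithin] with x hx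
        rw [← Real.rpow_natCast x m, mul_comm]
      simpa using h'.div_const (m:ℝ)
    simpa using l1.sub l2
  have key := helper_Ioc one_pos hd hc hnn hL
  refine ⟨key.1, ?_⟩
  rw [key.2, hF]
  norm_num

lemma catalan_summable : Summable (fun k : ℕ => (-1:ℝ)^k / (2*(k:ℝ)+1)^2) := by
  have hg : Summable (fun k : ℕ => 1 / ((k:ℝ)+1)^2) := by
    have h2 : Summable (fun n : ℕ => 1 / (n:ℝ)^2) :=
      Real.summable_one_div_nat_pow.mpr one_lt_two
    have := (summable_nat_add_iff 1).mpr h2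
    apply this.congr
    intro n
    push_cast
    ring
  apply Summable.of_abs
  apply hg.of_nonneg_of_le (fun k => abs_nonneg _)
  intro k
  rw [abs_div, abs_pow, abs_neg, abs_one, one_pow, abs_of_nonneg (by positivity : (0:ℝ) ≤ (2*(k:ℝ)+1)^2)]
  rw [div_le_div_iff₀ (by positivity) (by positivity)]
  nlinarith [(Nat.cast_nonneg k : (0:ℝ) ≤ k)]

lemma catalan_integral :
    IntegrableOn (fun t : ℝ => (1+t^2)⁻¹ * (-Real.log t)) (Ioc 0 1) ∧
    ∫ t in Ioc (0:ℝ) 1, (1+t^2)⁻¹ * (-Real.log t)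
      = ∑' k : ℕ, (-1:ℝ)^k / (2*(k:ℝ)+1)^2 := by
  have hmes : AEStronglyMeasurable (fun t : ℝ => (1+t^2)⁻¹ * (-Real.log t))
      (volume.restrict (Ioc (0:ℝ) 1)) := by
    apply ContinuousOn.aestronglyMeasurable _ measurableSet_Ioc
    apply ContinuousOn.mul
    · apply ContinuousOn.inv₀ (by fun_prop)
      intro x hx; positivity
    · exact (Real.continuousOn_log.mono (fun x hx => ne_of_gt hx.1)).neg
  have hbase := pow_neg_log_key 0
  have hlogint : IntegrableOn (fun t : ℝ => -Real.log t) (Ioc 0 1) := by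
    have := hbase.1
    simpa using this
  have hboundae : ∀ᵐ t ∂(volume.restrict (Ioc (0:ℝ) 1)),
      0 < t ∧ t ≤ 1 := by
    filter_upwards [ae_restrict_mem measurableSet_Ioc] with t ht
    exact ⟨ht.1, ht.2⟩
  have hInt : IntegrableOn (fun t : ℝ => (1+t^2)⁻¹ * (-Real.log t)) (Ioc 0 1) := by
    apply Integrable.mono' hlogint hmes
    filter_upwards [hboundae] with t ht
    have h1 : 0 ≤ -Real.log t := by simp [Real.log_nonpos ht.1.le ht.2]
    have h2 : (1+t^2)⁻¹ ≤ 1 := by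
      rw [inv_le_one_iff₀]; right; nlinarith
    rw [Real.norm_eq_abs, abs_of_nonneg (by positivity)]
    nlinarith [inv_nonneg.mpr (by positivity : (0:ℝ) ≤ 1+t^2)]
  refine ⟨hInt, ?_⟩
  set f : ℝ → ℝ := fun t => (1+t^2)⁻¹ * (-Real.log t) with hf
  have hterm : ∀ k : ℕ, IntegrableOn (fun t : ℝ => (-1:ℝ)^k * (t^(2*k) * (-Real.log t))) (Ioc 0 1) :=
    fun k => ((pow_neg_log_key k).1).const_mul _
  have hRint : ∀ n : ℕ, IntegrableOn (fun t : ℝ => (-t^2)^n * f t) (Ioc 0 1) := by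
    intro n
    apply Integrable.mono' hlogint
    · exact (((continuous_pow n).comp (continuous_pow 2).neg).aestronglyMeasurable).mul hmes
    · filter_upwards [hboundae] with t ht
      have h1 : 0 ≤ -Real.log t := by simp [Real.log_nonpos ht.1.le ht.2]
      have h2 : (1+t^2)⁻¹ ≤ 1 := by rw [inv_le_one_iff₀]; right; nlinarith
      have h2' : (0:ℝ) ≤ (1+t^2)⁻¹ := by positivity
      have h3 : |(-t^2)^n| ≤ 1 := by
        rw [abs_pow, abs_neg, abs_of_nonneg (by positivity : (0:ℝ) ≤ t^2)]
        apply pow_le_one₀ (by positivity)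
        nlinarith [ht.2, ht.1.le]
      rw [Real.norm_eq_abs, abs_mul, abs_of_nonneg (by positivity : (0:ℝ) ≤ (1+t^2)⁻¹ * (-Real.log t))]
      calc |(-t^2)^n| * ((1+t^2)⁻¹ * (-Real.log t))
          ≤ 1 * ((1+t^2)⁻¹ * (-Real.log t)) := by
            apply mul_le_mul_of_nonneg_right h3 (by positivity)
        _ ≤ -Real.log t := by nlinarith
  have hS : ∀ n : ℕ, ∫ t in Ioc (0:ℝ) 1, f t
      = (∑ k ∈ Finset.range n, (-1:ℝ)^k / (2*(k:ℝ)+1)^2)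
        + ∫ t in Ioc (0:ℝ) 1, (-t^2)^n * f t := by
    intro n
    have hptwise : ∀ t ∈ Ioc (0:ℝ) 1, f t
        = (∑ k ∈ Finset.range n, (-1:ℝ)^k * (t^(2*k) * (-Real.log t))) + (-t^2)^n * f t := by
      intro t ht
      have h1 : (1:ℝ)+t^2 ≠ 0 := by positivity
      have hx : (-t^2 : ℝ) ≠ 1 := by nlinarith [sq_nonneg t]
      have hgeo := geom_sum_eq hx n
      have hsum : ∑ k ∈ Finset.range n, (-1:ℝ)^k * (t^(2*k) * (-Real.log t))
          = (-Real.log t) * (((-t^2)^n - 1)/((-t^2) - 1)) := by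
        rw [← hgeo, Finset.mul_sum]
        apply Finset.sum_congr rfl
        intro k _
        rw [neg_pow, pow_mul]
        ring
      have hne : (-t^2 - 1 : ℝ) ≠ 0 := by nlinarith [sq_nonneg t]
      have key : ((-t^2)^n - 1)/((-t^2) - 1) = (1 - (-t^2)^n) * (1+t^2)⁻¹ := by
        rw [div_eq_iff hne]
        field_simp
        ring
      rw [hf, hsum, key]
      ring
    have hsplit : ∫ t in Ioc (0:ℝ) 1, f t
        = ∫ t in Ioc (0:ℝ) 1, ((∑ k ∈ Finset.range n, (-1:ℝ)^k * (t^(2*k) * (-Real.log t))) + (-t^2)^n * f t) := by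
      apply setIntegral_congr_fun measurableSet_Ioc
      intro t ht
      exact hptwise t ht
    rw [hsplit, integral_add (by exact integrable_finset_sum _ (fun k _ => hterm k)) (hRint n)]
    congr 1
    rw [integral_finset_sum _ (fun k _ => hterm k)]
    apply Finset.sum_congr rfl
    intro k _
    rw [integral_const_mul, (pow_neg_log_key k).2]
    push_cast
    rw [div_eq_mul_inv, inv_pow]
  -- remainder tends to zero
  have hRbound : ∀ n : ℕ, ‖∫ t in Ioc (0:ℝ) 1, (-t^2)^n * f t‖ ≤ (((2*n+1 : ℕ) : ℝ))⁻¹ ^ 2 := by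
    intro n
    rw [← (pow_neg_log_key n).2]
    apply norm_integral_le_of_norm_le (pow_neg_log_key n).1
    filter_upwards [hboundae] with t ht
    have h1 : 0 ≤ -Real.log t := by simp [Real.log_nonpos ht.1.le ht.2]
    have h2 : (1+t^2)⁻¹ ≤ 1 := by rw [inv_le_one_iff₀]; right; nlinarith
    have h2' : (0:ℝ) ≤ (1+t^2)⁻¹ := by positivity
    rw [Real.norm_eq_abs, abs_mul, abs_pow, abs_neg, abs_of_nonneg (by positivity : (0:ℝ) ≤ t^2),
      abs_of_nonneg (by positivity : (0:ℝ) ≤ (1+t^2)⁻¹ * (-Real.log t)), ← pow_mul]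
    calc t^(2*n) * ((1+t^2)⁻¹ * (-Real.log t)) ≤ t^(2*n) * (1 * (-Real.log t)) := by
          apply mul_le_mul_of_nonneg_left _ (pow_nonneg ht.1.le _)
          apply mul_le_mul_of_nonneg_right h2 h1
      _ = t^(2*n) * (-Real.log t) := by ring
  have hR0 : Tendsto (fun n : ℕ => ∫ t in Ioc (0:ℝ) 1, (-t^2)^n * f t) atTop (𝓝 0) := by
    apply squeeze_zero_norm hRbound
    have : Tendsto (fun n : ℕ => (((2*n+1 : ℕ) : ℝ))⁻¹) atTop (𝓝 0) := by
      apply Tendsto.comp tendsto_inv_atTop_zero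
      apply tendsto_natCast_atTop_atTop.comp
      apply tendsto_atTop_mono (fun n => by omega : ∀ n : ℕ, n ≤ 2*n+1) tendsto_id
    simpa using (this.pow 2)
  have hSum := catalan_summable.hasSum.tendsto_sum_nat
  have hlim : Tendsto (fun n : ℕ => (∑ k ∈ Finset.range n, (-1:ℝ)^k / (2*(k:ℝ)+1)^2)
      + ∫ t in Ioc (0:ℝ) 1, (-t^2)^n * f t) atTop
      (𝓝 ((∑' k : ℕ, (-1:ℝ)^k / (2*(k:ℝ)+1)^2) + 0)) := hSum.add hR0
  rw [add_zero] at hlim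
  have hconst : Tendsto (fun _ : ℕ => ∫ t in Ioc (0:ℝ) 1, f t) atTop (𝓝 (∫ t in Ioc (0:ℝ) 1, f t)) :=
    tendsto_const_nhds
  have : (fun n : ℕ => (∑ k ∈ Finset.range n, (-1:ℝ)^k / (2*(k:ℝ)+1)^2)
      + ∫ t in Ioc (0:ℝ) 1, (-t^2)^n * f t) = fun _ : ℕ => ∫ t in Ioc (0:ℝ) 1, f t := by
    funext n
    rw [← hS n]
  rw [this] at hlim
  exact tendsto_nhds_unique hconst hlim

lemma arctan_image : Real.arctan '' (Ioo 0 1) = Ioo 0 (π/4) := by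
  ext y
  constructor
  · rintro ⟨x, hx, rfl⟩
    constructor
    · rw [← Real.arctan_zero]
      exact Real.arctan_strictMono hx.1
    · rw [← Real.arctan_one]
      exact Real.arctan_strictMono hx.2
  · intro hy
    have hy2 : y < π/2 := lt_trans hy.2 (by linarith [Real.pi_pos])
    refine ⟨Real.tan y, ⟨?_, ?_⟩, Real.arctan_tan (by linarith [Real.pi_pos, hy.1]) hy2⟩
    · exact Real.tan_pos_of_pos_of_lt_pi_div_two hy.1 hy2
    · rw [← Real.tan_pi_div_four]
      exact Real.tan_lt_tan_of_lt_of_lt_pi_div_two (by linarith [Real.pi_pos, hy.1])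
        (by linarith [Real.pi_pos]) hy.2

lemma cv_arctan (g : ℝ → ℝ) :
    ∫ θ in Ioo (0:ℝ) (π/4), g θ = ∫ t in Ioo (0:ℝ) 1, (1+t^2)⁻¹ * g (Real.arctan t) := by
  rw [← arctan_image]
  rw [integral_image_eq_integral_abs_deriv_smul measurableSet_Ioo
    (fun x _ => (Real.hasDerivAt_arctan x).hasDerivWithinAt) (Real.arctan_injective.injOn) g]
  apply setIntegral_congr_fun measurableSet_Ioo
  intro t _
  dsimp only
  rw [smul_eq_mul]
  congr 1
  rw [abs_of_pos (by positivity), one_div]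

lemma log_cos_cv : ∫ θ in Ioo (0:ℝ) (π/4), Real.log (Real.cos θ)
    = ∫ t in Ioo (0:ℝ) 1, (1+t^2)⁻¹ * (-(Real.log (1+t^2) / 2)) := by
  rw [cv_arctan (fun θ => Real.log (Real.cos θ))]
  apply setIntegral_congr_fun measurableSet_Ioo
  intro t _
  dsimp only
  congr 1
  rw [Real.cos_arctan, one_div, Real.log_inv, Real.log_sqrt (by positivity)]

lemma log_sin_cv : ∫ θ in Ioo (0:ℝ) (π/4), Real.log (Real.sin θ)
    = ∫ t in Ioo (0:ℝ) 1, (1+t^2)⁻¹ * (Real.log t - Real.log (1+t^2) / 2) := by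
  rw [cv_arctan (fun θ => Real.log (Real.sin θ))]
  apply setIntegral_congr_fun measurableSet_Ioo
  intro t ht
  dsimp only
  congr 1
  rw [Real.sin_arctan, Real.log_div (ne_of_gt ht.1) (by positivity), Real.log_sqrt (by positivity)]

lemma neg_log_integrable : IntegrableOn (fun x : ℝ => -Real.log x) (Ioc 0 (π/2)) := by
  have h1 : IntegrableOn (fun x : ℝ => -Real.log x) (Ioc 0 1) := by
    have := (pow_neg_log_key 0).1
    simpa using this
  have h2 : IntegrableOn (fun x : ℝ => -Real.log x) (Ioc 1 (π/2)) := by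
    apply ContinuousOn.integrableOn_Icc (a := (1:ℝ)) (b := π/2) _ |>.mono_set Ioc_subset_Icc_self
    apply ContinuousOn.neg
    apply ContinuousOn.mono Real.continuousOn_log
    intro x hx
    have : (1:ℝ) ≤ x := hx.1
    simp only [mem_compl_iff, mem_singleton_iff]
    intro h; rw [h] at this; linarith
  have hu : Ioc (0:ℝ) 1 ∪ Ioc (1:ℝ) (π/2) = Ioc (0:ℝ) (π/2) := by
    apply Ioc_union_Ioc_eq_Ioc zero_le_one
    linarith [Real.pi_gt_three]
  rw [← hu]
  exact h1.union h2

lemma log_sin_integrable : IntegrableOn (fun x : ℝ => Real.log (Real.sin x)) (Ioc 0 (π/2)) := by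
  have hg : IntegrableOn (fun x : ℝ => -Real.log x + Real.log (π/2)) (Ioc 0 (π/2)) :=
    neg_log_integrable.add (integrableOn_const measure_Ioc_lt_top.ne)
  apply Integrable.mono' hg
  · apply ContinuousOn.aestronglyMeasurable _ measurableSet_Ioc
    apply ContinuousOn.log (Real.continuous_sin.continuousOn)
    intro x hx
    exact ne_of_gt (Real.sin_pos_of_pos_of_lt_pi hx.1 (by linarith [Real.pi_pos, hx.2]))
  · filter_upwards [ae_restrict_mem measurableSet_Ioc] with x hx
    have hs1 : Real.sin x ≤ 1 := Real.sin_le_one x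
    have hspos : 0 < Real.sin x :=
      Real.sin_pos_of_pos_of_lt_pi hx.1 (by linarith [Real.pi_pos, hx.2])
    have hjordan : 2/π * x ≤ Real.sin x := Real.mul_le_sin hx.1.le hx.2
    have hlow : Real.log (2/π * x) ≤ Real.log (Real.sin x) :=
      Real.log_le_log (mul_pos (by positivity) hx.1) hjordan
    rw [Real.log_mul (by positivity) (ne_of_gt hx.1), Real.log_div two_ne_zero
      (ne_of_gt Real.pi_pos)] at hlow
    have hup : Real.log (Real.sin x) ≤ 0 := Real.log_nonpos hspos.le hs1
    rw [Real.norm_eq_abs, abs_of_nonpos hup]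
    have : Real.log (π/2) = Real.log π - Real.log 2 :=
      Real.log_div (ne_of_gt Real.pi_pos) two_ne_zero
    linarith

lemma log_cos_integrable04 : IntegrableOn (fun x : ℝ => Real.log (Real.cos x)) (Ioc 0 (π/4)) := by
  apply ContinuousOn.integrableOn_Icc (a := (0:ℝ)) (b := π/4) _ |>.mono_set Ioc_subset_Icc_self
  apply ContinuousOn.log (Real.continuous_cos.continuousOn)
  intro x hx
  apply ne_of_gt
  apply Real.cos_pos_of_mem_Ioo
  constructor
  · linarith [Real.pi_pos, hx.1]
  · linarith [Real.pi_pos, hx.2]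

lemma log_sin_integrable04 : IntegrableOn (fun x : ℝ => Real.log (Real.sin x)) (Ioc 0 (π/4)) :=
  log_sin_integrable.mono_set (Ioc_subset_Ioc_right (by linarith [Real.pi_pos]))

lemma sum_AB : (∫ x in Ioc (0:ℝ) (π/4), Real.log (Real.cos x))
    + (∫ x in Ioc (0:ℝ) (π/4), Real.log (Real.sin x)) = -(π/2) * Real.log 2 := by
  set A := ∫ x in Ioc (0:ℝ) (π/4), Real.log (Real.cos x) with hA
  set B := ∫ x in Ioc (0:ℝ) (π/4), Real.log (Real.sin x) with hB
  have hpi4 : (0:ℝ) ≤ π/4 := by linarith [Real.pi_pos]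
  have hpi42 : (π/4:ℝ) ≤ π/2 := by linarith [Real.pi_pos]
  -- interval integral versions
  have hAi : ∫ x in (0:ℝ)..(π/4), Real.log (Real.cos x) = A := by
    rw [intervalIntegral.integral_of_le hpi4]
  have hBi : ∫ x in (0:ℝ)..(π/4), Real.log (Real.sin x) = B := by
    rw [intervalIntegral.integral_of_le hpi4]
  -- reflection
  have hrefl : ∫ x in (π/4:ℝ)..(π/2), Real.log (Real.sin x)
      = ∫ x in (0:ℝ)..(π/4), Real.log (Real.cos x) := by
    have h := intervalIntegral.integral_comp_sub_left (a := (0:ℝ)) (b := π/4)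
      (fun x => Real.log (Real.sin x)) (π/2)
    have h2 : ∀ x : ℝ, Real.log (Real.sin (π/2 - x)) = Real.log (Real.cos x) := by
      intro x; rw [Real.sin_pi_div_two_sub]
    simp only [h2] at h
    rw [show π/2 - π/4 = π/4 by ring, show π/2 - (0:ℝ) = π/2 by ring] at h
    exact h.symm
  -- split I
  have hII : IntervalIntegrable (fun x => Real.log (Real.sin x)) volume 0 (π/4) := by
    rw [intervalIntegrable_iff_integrableOn_Ioc_of_le hpi4]
    exact log_sin_integrable04
  have hII2 : IntervalIntegrable (fun x => Real.log (Real.sin x)) volume (π/4) (π/2) := by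
    rw [intervalIntegrable_iff_integrableOn_Ioc_of_le hpi42]
    exact log_sin_integrable.mono_set (Ioc_subset_Ioc_left hpi4)
  have hsplit : ∫ x in (0:ℝ)..(π/2), Real.log (Real.sin x) = B + A := by
    rw [← intervalIntegral.integral_add_adjacent_intervals hII hII2, hBi, hrefl, hAi]
  -- duplication
  have hdup : ∫ x in (0:ℝ)..(π/4), Real.log (Real.sin (2*x))
      = 2⁻¹ * ∫ x in (0:ℝ)..(π/2), Real.log (Real.sin x) := by
    have h := intervalIntegral.integral_comp_mul_left (a := (0:ℝ)) (b := π/4)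
      (fun x => Real.log (Real.sin x)) (c := 2)
    have h' := h two_ne_zero
    rw [show (2:ℝ)*(π/4) = π/2 by ring, show (2:ℝ)*0 = 0 by ring] at h'
    rw [h', smul_eq_mul]
  have hexp : ∫ x in (0:ℝ)..(π/4), Real.log (Real.sin (2*x))
      = (π/4) * Real.log 2 + B + A := by
    rw [intervalIntegral.integral_of_le hpi4]
    have hcongr : ∫ x in Ioc (0:ℝ) (π/4), Real.log (Real.sin (2*x))
        = ∫ x in Ioc (0:ℝ) (π/4),
            (Real.log 2 + Real.log (Real.sin x) + Real.log (Real.cos x)) := by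
      apply setIntegral_congr_fun measurableSet_Ioc
      intro x hx
      dsimp only
      have hsin : Real.sin x ≠ 0 :=
        ne_of_gt (Real.sin_pos_of_pos_of_lt_pi hx.1 (by linarith [Real.pi_pos, hx.2]))
      have hcos : Real.cos x ≠ 0 := by
        apply ne_of_gt
        apply Real.cos_pos_of_mem_Ioo
        constructor <;> [linarith [Real.pi_pos, hx.1]; linarith [Real.pi_pos, hx.2]]
      rw [Real.sin_two_mul, Real.log_mul (by norm_num [hsin]) hcos,
        Real.log_mul two_ne_zero hsin]
    have e1 : ∫ x in Ioc (0:ℝ) (π/4),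
        (Real.log 2 + Real.log (Real.sin x) + Real.log (Real.cos x))
        = (∫ x in Ioc (0:ℝ) (π/4), (Real.log 2 + Real.log (Real.sin x)))
          + ∫ x in Ioc (0:ℝ) (π/4), Real.log (Real.cos x) :=
      integral_add ((integrable_const _).add log_sin_integrable04) log_cos_integrable04
    have e2 : ∫ x in Ioc (0:ℝ) (π/4), (Real.log 2 + Real.log (Real.sin x))
        = (∫ _x in Ioc (0:ℝ) (π/4), Real.log 2)
          + ∫ x in Ioc (0:ℝ) (π/4), Real.log (Real.sin x) :=
      integral_add (integrable_const _) log_sin_integrable04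
    have e3 : ∫ _x in Ioc (0:ℝ) (π/4), Real.log 2 = (π/4) * Real.log 2 := by
      rw [setIntegral_const, smul_eq_mul, measureReal_def, Real.volume_Ioc,
        ENNReal.toReal_ofReal (by linarith [Real.pi_pos])]
      norm_num
    rw [hcongr, e1, e2, e3]
  rw [hsplit] at hdup
  rw [hexp] at hdup
  linarith

lemma log_cos_value : ∫ x in Ioc (0:ℝ) (π/4), Real.log (Real.cos x)
    = (∑' k : ℕ, (-1:ℝ)^k / (2*(k:ℝ)+1)^2) / 2 - (π/4) * Real.log 2 := by
  set φA : ℝ → ℝ := fun t => (1+t^2)⁻¹ * (-(Real.log (1+t^2) / 2)) with hφA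
  set φB : ℝ → ℝ := fun t => (1+t^2)⁻¹ * (Real.log t - Real.log (1+t^2) / 2) with hφB
  have hAcont : Continuous φA := by
    apply Continuous.mul
    · apply Continuous.inv₀ (by fun_prop)
      intro x; positivity
    · apply Continuous.neg
      apply Continuous.div_const
      exact Continuous.log (by fun_prop) (fun x => by positivity)
  have hAint : IntegrableOn φA (Ioo 0 1) :=
    (hAcont.integrableOn_Icc (a := (0:ℝ)) (b := 1)).mono_set Ioo_subset_Icc_self
  have hcat' : IntegrableOn (fun t : ℝ => (1+t^2)⁻¹ * (-Real.log t)) (Ioo 0 1) :=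
    catalan_integral.1.mono_set Ioo_subset_Ioc_self
  have hBint : IntegrableOn φB (Ioo 0 1) := by
    have heq : φB = fun t => φA t - (1+t^2)⁻¹ * (-Real.log t) := by
      funext t; rw [hφA, hφB]; ring
    rw [heq]
    exact hAint.sub hcat'
  have hdiff : (∫ x in Ioc (0:ℝ) (π/4), Real.log (Real.cos x))
      - (∫ x in Ioc (0:ℝ) (π/4), Real.log (Real.sin x))
      = ∑' k : ℕ, (-1:ℝ)^k / (2*(k:ℝ)+1)^2 := by
    rw [integral_Ioc_eq_integral_Ioo, integral_Ioc_eq_integral_Ioo, log_cos_cv, log_sin_cv,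
      ← integral_sub hAint hBint]
    have : ∀ t : ℝ, φA t - φB t = (1+t^2)⁻¹ * (-Real.log t) := by
      intro t; rw [hφA, hφB]; ring
    simp only [this]
    rw [← integral_Ioc_eq_integral_Ioo]
    exact catalan_integral.2
  have hsum := sum_AB
  linarith

lemma min_tan_eq (θ : ℝ) :
    Real.log (1 + min (Real.tan θ ^ 2) (Real.tan θ ^ 2)⁻¹)
      = -2 * Real.log (max |Real.cos θ| |Real.sin θ|) := by
  by_cases hcos : Real.cos θ = 0
  · have htan : Real.tan θ = 0 := by rw [Real.tan_eq_sin_div_cos, hcos, div_zero]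
    have hsin : |Real.sin θ| = 1 := by
      have h1 : Real.sin θ ^ 2 = 1 := by
        have := Real.sin_sq_add_cos_sq θ
        rw [hcos] at this; nlinarith
      rw [← Real.sqrt_sq_eq_abs, h1, Real.sqrt_one]
    rw [htan, hsin, hcos]
    norm_num
  by_cases hsin : Real.sin θ = 0
  · have htan : Real.tan θ = 0 := by rw [Real.tan_eq_sin_div_cos, hsin, zero_div]
    have hcos1 : |Real.cos θ| = 1 := by
      have h1 : Real.cos θ ^ 2 = 1 := by
        have := Real.sin_sq_add_cos_sq θ
        rw [hsin] at this; nlinarith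
      rw [← Real.sqrt_sq_eq_abs, h1, Real.sqrt_one]
    rw [htan, hsin, hcos1]
    norm_num
  have hcos2 : 0 < Real.cos θ ^ 2 := by positivity
  have hsin2 : 0 < Real.sin θ ^ 2 := by positivity
  have htansq : Real.tan θ ^ 2 = Real.sin θ ^ 2 / Real.cos θ ^ 2 := by
    rw [Real.tan_eq_sin_div_cos, div_pow]
  have htanpos : 0 < Real.tan θ ^ 2 := by rw [htansq]; positivity
  have hid := Real.inv_one_add_tan_sq hcos
  rcases le_total |Real.sin θ| |Real.cos θ| with h | h
  · have hsq : Real.sin θ ^ 2 ≤ Real.cos θ ^ 2 := by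
      rw [← sq_abs (Real.sin θ), ← sq_abs (Real.cos θ)]
      exact pow_le_pow_left₀ (abs_nonneg _) h 2
    have htle : Real.tan θ ^ 2 ≤ 1 := by
      rw [htansq, div_le_one hcos2]; exact hsq
    have hmin : min (Real.tan θ ^ 2) (Real.tan θ ^ 2)⁻¹ = Real.tan θ ^ 2 := by
      apply min_eq_left
      calc Real.tan θ ^ 2 ≤ 1 := htle
        _ ≤ (Real.tan θ ^ 2)⁻¹ := one_le_inv_iff₀.mpr ⟨htanpos, htle⟩
    have h1t : 1 + Real.tan θ ^ 2 = (Real.cos θ ^ 2)⁻¹ := by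
      rw [← hid, inv_inv]
    rw [hmin, h1t, Real.log_inv, max_eq_left h, ← sq_abs (Real.cos θ), Real.log_pow]
    push_cast
    ring
  · have hsq : Real.cos θ ^ 2 ≤ Real.sin θ ^ 2 := by
      rw [← sq_abs (Real.sin θ), ← sq_abs (Real.cos θ)]
      exact pow_le_pow_left₀ (abs_nonneg _) h 2
    have htge : 1 ≤ Real.tan θ ^ 2 := by
      rw [htansq, le_div_iff₀ hcos2, one_mul]; exact hsq
    have hmin : min (Real.tan θ ^ 2) (Real.tan θ ^ 2)⁻¹ = (Real.tan θ ^ 2)⁻¹ := by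
      apply min_eq_right
      calc (Real.tan θ ^ 2)⁻¹ ≤ 1 := inv_le_one_of_one_le₀ htge
        _ ≤ Real.tan θ ^ 2 := htge
    have hinvtan : (Real.tan θ ^ 2)⁻¹ = Real.cos θ ^ 2 / Real.sin θ ^ 2 := by
      rw [htansq, inv_div]
    have h1t : 1 + (Real.tan θ ^ 2)⁻¹ = (Real.sin θ ^ 2)⁻¹ := by
      rw [hinvtan]
      field_simp
      exact Real.sin_sq_add_cos_sq θ
    rw [hmin, h1t, Real.log_inv, max_eq_right h, ← sq_abs (Real.sin θ), Real.log_pow]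
    push_cast
    ring

section Reduce

noncomputable def G0 : ℝ → ℝ := fun θ => Real.log (max |Real.cos θ| |Real.sin θ|)

lemma G0_max_pos (θ : ℝ) : 0 < max |Real.cos θ| |Real.sin θ| := by
  by_cases h : Real.cos θ = 0
  · have h1 : Real.sin θ ^ 2 = 1 := by
      have := Real.sin_sq_add_cos_sq θ
      rw [h] at this; nlinarith
    have : |Real.sin θ| = 1 := by rw [← Real.sqrt_sq_eq_abs, h1, Real.sqrt_one]
    rw [this]
    exact lt_of_lt_of_le one_pos (le_max_right _ _)
  · exact lt_of_lt_of_le (abs_pos.mpr h) (le_max_left _ _)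

lemma G0_cont : Continuous G0 :=
  Continuous.log ((Real.continuous_cos.abs).max (Real.continuous_sin.abs))
    (fun θ => ne_of_gt (G0_max_pos θ))

lemma G0_per : Function.Periodic G0 (π/2) := by
  intro x
  unfold G0
  rw [Real.sin_add_pi_div_two, Real.cos_add_pi_div_two, abs_neg, max_comm]

lemma G0_refl (x : ℝ) : G0 (π/2 - x) = G0 x := by
  unfold G0
  rw [Real.sin_pi_div_two_sub, Real.cos_pi_div_two_sub, max_comm]

lemma G0_eq_log_cos {x : ℝ} (hx : x ∈ Ioc (0:ℝ) (π/4)) : G0 x = Real.log (Real.cos x) := by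
  have hpi := Real.pi_pos
  have hx2 : x ≤ π/2 := by
    rcases hx with ⟨h1, h2⟩; linarith
  have hcosnn : 0 ≤ Real.cos x := Real.cos_nonneg_of_mem_Icc ⟨by linarith [hx.1], hx2⟩
  have hsinnn : 0 ≤ Real.sin x := Real.sin_nonneg_of_nonneg_of_le_pi (by linarith [hx.1]) (by linarith)
  have hsincos : Real.sin x ≤ Real.cos x := by
    rw [← Real.sin_pi_div_two_sub]
    apply Real.strictMonoOn_sin.monotoneOn
    · constructor <;> [linarith [hx.1]; linarith]
    · constructor <;> [linarith [hx.2]; linarith [hx.1]]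
    · linarith [hx.2]
  unfold G0
  rw [abs_of_nonneg hcosnn, abs_of_nonneg hsinnn, max_eq_left hsincos]

lemma main_integral_reduce :
    ∫ θ in Ico (0:ℝ) (2*π), Real.log (1 + min (Real.tan θ ^ 2) (Real.tan θ ^ 2)⁻¹)
      = -16 * ((∑' k : ℕ, (-1:ℝ)^k / (2*(k:ℝ)+1)^2) / 2 - (π/4) * Real.log 2) := by
  have hpi := Real.pi_pos
  have h_int : ∀ t₁ t₂ : ℝ, IntervalIntegrable G0 volume t₁ t₂ :=
    fun t₁ t₂ => G0_cont.intervalIntegrable t₁ t₂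
  have step1 : ∫ θ in Ico (0:ℝ) (2*π), Real.log (1 + min (Real.tan θ ^ 2) (Real.tan θ ^ 2)⁻¹)
      = ∫ θ in (0:ℝ)..(2*π), (-2) * G0 θ := by
    rw [intervalIntegral.integral_of_le (by linarith), integral_Ico_eq_integral_Ioo,
      integral_Ioc_eq_integral_Ioo]
    apply setIntegral_congr_fun measurableSet_Ioo
    intro θ _
    exact min_tan_eq θ
  have step2 : ∫ θ in (0:ℝ)..(2*π), (-2) * G0 θ = -2 * ∫ θ in (0:ℝ)..(2*π), G0 θ :=
    intervalIntegral.integral_const_mul _ _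
  have step3 : ∫ θ in (0:ℝ)..(2*π), G0 θ = 4 * ∫ θ in (0:ℝ)..(π/2), G0 θ := by
    have h4 := G0_per.intervalIntegral_add_zsmul_eq 4 0 h_int
    have e1 : (0:ℝ) + (4:ℤ) • (π/2) = 2*π := by rw [zsmul_eq_mul]; push_cast; ring
    have e2 : (0:ℝ) + π/2 = π/2 := by ring
    rw [e1, e2] at h4
    rw [h4, zsmul_eq_mul]
    push_cast
    ring
  have step4 : ∫ θ in (0:ℝ)..(π/2), G0 θ = 2 * ∫ θ in (0:ℝ)..(π/4), G0 θ := by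
    have hsplit : ∫ θ in (0:ℝ)..(π/2), G0 θ
        = (∫ θ in (0:ℝ)..(π/4), G0 θ) + ∫ θ in (π/4:ℝ)..(π/2), G0 θ :=
      (intervalIntegral.integral_add_adjacent_intervals (h_int _ _) (h_int _ _)).symm
    have hrefl : ∫ θ in (π/4:ℝ)..(π/2), G0 θ = ∫ θ in (0:ℝ)..(π/4), G0 θ := by
      have h := intervalIntegral.integral_comp_sub_left (a := (0:ℝ)) (b := π/4) G0 (π/2)
      simp only [G0_refl] at h
      rw [show π/2 - π/4 = π/4 by ring, show π/2 - (0:ℝ) = π/2 by ring] at h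
      exact h.symm
    rw [hsplit, hrefl]
    ring
  have step5 : ∫ θ in (0:ℝ)..(π/4), G0 θ
      = (∑' k : ℕ, (-1:ℝ)^k / (2*(k:ℝ)+1)^2) / 2 - (π/4) * Real.log 2 := by
    rw [intervalIntegral.integral_of_le (by linarith)]
    rw [← log_cos_value]
    apply setIntegral_congr_fun measurableSet_Ioc
    intro x hx
    exact G0_eq_log_cos hx
  rw [step1, step2, step3, step4, step5]
  ring

end Reduce

/-- For `θ` uniform on `[0, 2π)`, the logarithm of the per-coordinate GEPP growth factor
of a Haar-butterfly matrix has mean `2 ln 2 − 4G/π`, `G` being Catalan's constant: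
`(2π)⁻¹ ∫₀^{2π} ln(1 + min(tan²θ, 1/tan²θ)) dθ = 2 ln 2 − (4/π)·Σ_{k≥0} (−1)^k/(2k+1)²`. -/
theorem log_GEPP_growth_mean :
    (2 * π)⁻¹ *
        (∫ θ in Set.Ico (0 : ℝ) (2 * π),
          Real.log (1 + min (Real.tan θ ^ 2) (Real.tan θ ^ 2)⁻¹)) =
      2 * Real.log 2 - (4 / π) * ∑' k : ℕ, (-1 : ℝ) ^ k / (2 * (k : ℝ) + 1) ^ 2 := by
  have hpi := Real.pi_pos
  rw [main_integral_reduce]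
  field_simp
  ring
end
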